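/- Let γ ∈ (0,1], C > 0 and C̃ > 0. Define C_k = C^k ∏_{l=1}^{k-1} B(lγ/2, γ/2) (empty product equal to 1), and define the sequence (C̃_k) recursively by C̃_1 = C̃ and C̃_{k+1} = (C_k · C̃ + C · C̃_k) · B(kγ/2, γ/2) for k ≥ 1. Then for every T ≥ 0 the series ∑_{k=1}^∞ C̃_k · T^{kγ/2} converges. -/

import Mathlib

open MeasureTheory

/-- The Euler Beta function `B(a,b) = ∫₀¹ u^{a-1}(1-u)^{b-1} du`. -/
noncomputable def Beta (a b : ℝ) : ℝ :=
  ∫ u in (0:ℝ)..1, u ^ (a - 1) * (1 - u) ^ (b - 1)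

/-- The parametrix constants `C_k = C^k ∏_{l=1}^{k-1} B(lγ/2, γ/2)`. -/
noncomputable def Cpar (γ C : ℝ) (k : ℕ) : ℝ :=
  C ^ k * ∏ l ∈ Finset.Icc 1 (k - 1), Beta ((l : ℝ) * γ / 2) (γ / 2)

/-- The sequence `C̃_1 = C̃`, `C̃_{k+1} = (C_k C̃ + C C̃_k) B(kγ/2, γ/2)` (value at `0` is junk). -/
noncomputable def Ctil (γ C Ct : ℝ) : ℕ → ℝ
  | 0 => 0
  | 1 => Ct
  | (k + 2) =>
      (Cpar γ C (k + 1) * Ct + C * Ctil γ C Ct (k + 1)) *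
        Beta (((k : ℝ) + 1) * γ / 2) (γ / 2)

open Filter intervalIntegral

section aux

lemma beta_nonneg (a b : ℝ) : 0 ≤ Beta a b := by
  apply intervalIntegral.integral_nonneg zero_le_one
  intro u hu
  exact mul_nonneg (Real.rpow_nonneg hu.1 _) (Real.rpow_nonneg (by linarith [hu.2]) _)

lemma beta_integrable {a b : ℝ} (ha : 1 ≤ a) (hb : 0 < b) {x y : ℝ}
    (hx : x ∈ Set.Icc (0:ℝ) 1) (hy : y ∈ Set.Icc (0:ℝ) 1) :
    IntervalIntegrable (fun u : ℝ => u ^ (a - 1) * (1 - u) ^ (b - 1)) volume x y := by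
  have h1 : IntervalIntegrable (fun u : ℝ => (1 - u) ^ (b - 1)) volume x y := by
    have h0 : IntervalIntegrable (fun v : ℝ => v ^ (b - 1)) volume (1 - x) (1 - y) :=
      intervalIntegral.intervalIntegrable_rpow' (by linarith)
    simpa using h0.comp_sub_left 1
  have hc : ContinuousOn (fun u : ℝ => u ^ (a - 1)) (Set.uIcc x y) := by
    intro u _
    exact (Real.continuousAt_rpow_const u (a - 1) (Or.inr (by linarith))).continuousWithinAt
  exact h1.continuousOn_mul hc

lemma int_one_sub_rpow {b : ℝ} (hb : 0 < b) (x y : ℝ) :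
    ∫ u in x..y, (1 - u) ^ (b - 1) = ((1 - x) ^ b - (1 - y) ^ b) / b := by
  have h := intervalIntegral.integral_comp_sub_left (a := x) (b := y)
    (fun v : ℝ => v ^ (b - 1)) 1
  rw [h, integral_rpow (Or.inl (by linarith))]
  have hb1 : b - 1 + 1 = b := by ring
  rw [hb1]

lemma beta_le {a b ε : ℝ} (ha : 1 ≤ a) (hb : 0 < b) (hε0 : 0 < ε) (hε1 : ε < 1) :
    Beta a b ≤ (1 - ε) ^ (a - 1) / b + ε ^ b / b := by
  have hmem0 : (0:ℝ) ∈ Set.Icc (0:ℝ) 1 := by constructor <;> norm_num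
  have hmem1 : (1:ℝ) ∈ Set.Icc (0:ℝ) 1 := by constructor <;> norm_num
  have hmemε : (1 - ε) ∈ Set.Icc (0:ℝ) 1 := by constructor <;> linarith
  have hI1 := beta_integrable ha hb hmem0 hmemε
  have hI2 := beta_integrable ha hb hmemε hmem1
  have hsplit : Beta a b = (∫ u in (0:ℝ)..(1 - ε), u ^ (a - 1) * (1 - u) ^ (b - 1))
      + ∫ u in (1 - ε)..1, u ^ (a - 1) * (1 - u) ^ (b - 1) :=
    (intervalIntegral.integral_add_adjacent_intervals hI1 hI2).symm
  have hG1 : IntervalIntegrable (fun u : ℝ => (1 - ε) ^ (a - 1) * (1 - u) ^ (b - 1))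
      volume 0 (1 - ε) := by
    have h0 : IntervalIntegrable (fun v : ℝ => v ^ (b - 1)) volume 1 ε :=
      intervalIntegral.intervalIntegrable_rpow' (by linarith)
    have h1 : IntervalIntegrable (fun u : ℝ => (1 - u) ^ (b - 1)) volume 0 (1 - ε) := by
      simpa using h0.comp_sub_left 1
    exact h1.const_mul _
  have hG2 : IntervalIntegrable (fun u : ℝ => (1 - u) ^ (b - 1)) volume (1 - ε) 1 := by
    have h0 : IntervalIntegrable (fun v : ℝ => v ^ (b - 1)) volume ε 0 :=
      intervalIntegral.intervalIntegrable_rpow' (by linarith)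
    simpa using h0.comp_sub_left 1
  have hbd1 : (∫ u in (0:ℝ)..(1 - ε), u ^ (a - 1) * (1 - u) ^ (b - 1))
      ≤ ∫ u in (0:ℝ)..(1 - ε), (1 - ε) ^ (a - 1) * (1 - u) ^ (b - 1) := by
    apply intervalIntegral.integral_mono_on (by linarith) hI1 hG1
    intro u hu
    apply mul_le_mul_of_nonneg_right
    · exact Real.rpow_le_rpow hu.1 hu.2 (by linarith)
    · exact Real.rpow_nonneg (by linarith [hu.2]) _
  have hbd2 : (∫ u in (1 - ε)..1, u ^ (a - 1) * (1 - u) ^ (b - 1))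
      ≤ ∫ u in (1 - ε)..1, (1 - u) ^ (b - 1) := by
    apply intervalIntegral.integral_mono_on (by linarith) hI2 hG2
    intro u hu
    have hu0 : (0:ℝ) ≤ u := by linarith [hu.1]
    calc u ^ (a - 1) * (1 - u) ^ (b - 1)
        ≤ 1 * (1 - u) ^ (b - 1) := by
          apply mul_le_mul_of_nonneg_right
          · exact Real.rpow_le_one hu0 hu.2 (by linarith)
          · exact Real.rpow_nonneg (by linarith [hu.2]) _
      _ = (1 - u) ^ (b - 1) := one_mul _
  have hc1 : (∫ u in (0:ℝ)..(1 - ε), (1 - ε) ^ (a - 1) * (1 - u) ^ (b - 1))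
      = (1 - ε) ^ (a - 1) * ((1 - ε ^ b) / b) := by
    rw [intervalIntegral.integral_const_mul, int_one_sub_rpow hb]
    norm_num
  have hc2 : (∫ u in (1 - ε)..1, (1 - u) ^ (b - 1)) = ε ^ b / b := by
    rw [int_one_sub_rpow hb]
    norm_num
    rw [Real.zero_rpow hb.ne']
    ring
  have hεb : (0:ℝ) ≤ ε ^ b := Real.rpow_nonneg hε0.le _
  have hεb1 : (1 - ε) ^ (a - 1) * ((1 - ε ^ b) / b) ≤ (1 - ε) ^ (a - 1) / b := by
    have h1 : (0:ℝ) ≤ (1 - ε) ^ (a - 1) := Real.rpow_nonneg (by linarith) _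
    have h2 : (1 - ε ^ b) / b ≤ 1 / b := by
      gcongr
      linarith
    calc (1 - ε) ^ (a - 1) * ((1 - ε ^ b) / b) ≤ (1 - ε) ^ (a - 1) * (1 / b) :=
          mul_le_mul_of_nonneg_left h2 h1
      _ = (1 - ε) ^ (a - 1) / b := by ring
  calc Beta a b = _ + _ := hsplit
    _ ≤ (1 - ε) ^ (a - 1) * ((1 - ε ^ b) / b) + ε ^ b / b := by
        rw [← hc1, ← hc2]; exact add_le_add hbd1 hbd2
    _ ≤ (1 - ε) ^ (a - 1) / b + ε ^ b / b := add_le_add_left hεb1 _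

lemma beta_eventually_le {b δ : ℝ} (hb : 0 < b) (hδ : 0 < δ) :
    ∀ᶠ a in atTop, Beta a b ≤ δ := by
  set ε := min (1/2 : ℝ) ((b * δ / 2) ^ b⁻¹) with hεdef
  have hpos : (0:ℝ) < b * δ / 2 := by positivity
  have hε0 : 0 < ε := lt_min (by norm_num) (Real.rpow_pos_of_pos hpos _)
  have hε1 : ε < 1 := lt_of_le_of_lt (min_le_left _ _) (by norm_num)
  have h2 : ε ^ b / b ≤ δ / 2 := by
    have hεb : ε ^ b ≤ b * δ / 2 := by
      calc ε ^ b ≤ ((b * δ / 2) ^ b⁻¹) ^ b :=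
            Real.rpow_le_rpow hε0.le (min_le_right _ _) hb.le
        _ = b * δ / 2 := Real.rpow_inv_rpow hpos.le hb.ne'
    rw [div_le_iff₀ hb]
    calc ε ^ b ≤ b * δ / 2 := hεb
      _ = δ / 2 * b := by ring
  have hbase : Tendsto (fun x : ℝ => (1 - ε) ^ x) atTop (nhds 0) :=
    tendsto_rpow_atTop_of_base_lt_one _ (by linarith) (by linarith)
  have hcomp : Tendsto (fun a : ℝ => (1 - ε) ^ (a - 1)) atTop (nhds 0) :=
    hbase.comp (tendsto_atTop_add_const_right atTop (-1) tendsto_id)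
  have hev : ∀ᶠ a : ℝ in atTop, (1 - ε) ^ (a - 1) ≤ b * (δ / 2) :=
    hcomp.eventually_le_const (by positivity : (0:ℝ) < b * (δ / 2))
  filter_upwards [hev, eventually_ge_atTop (1:ℝ)] with a h1 h2'
  have := beta_le (b := b) (ε := ε) h2' hb hε0 hε1
  have hfirst : (1 - ε) ^ (a - 1) / b ≤ δ / 2 := by
    rw [div_le_iff₀ hb]
    calc (1 - ε) ^ (a - 1) ≤ b * (δ / 2) := h1
      _ = δ / 2 * b := by ring
  linarith

lemma ctil_eq (γ C Ct : ℝ) :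
    ∀ k : ℕ, Ctil γ C Ct (k + 1)
      = ((k : ℝ) + 1) * Ct * C ^ k * ∏ l ∈ Finset.Icc 1 k, Beta ((l : ℝ) * γ / 2) (γ / 2)
  | 0 => by simp [Ctil]
  | (k + 1) => by
    show Ctil γ C Ct (k + 2) = _
    rw [show Ctil γ C Ct (k + 2)
        = (Cpar γ C (k + 1) * Ct + C * Ctil γ C Ct (k + 1)) *
            Beta (((k : ℝ) + 1) * γ / 2) (γ / 2) from rfl]
    rw [ctil_eq γ C Ct k, Cpar]
    have hk : k + 1 - 1 = k := rfl
    rw [hk, Finset.prod_Icc_succ_top (Nat.le_add_left 1 k)]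
    push_cast
    ring

end aux

/-- The series `∑_{k≥1} C̃_k T^{kγ/2}` converges. -/
theorem tilde_parametrix_series_summable (γ C Ct : ℝ)
    (hγ : γ ∈ Set.Ioc (0:ℝ) 1) (hC : 0 < C) (hCt : 0 < Ct) (T : ℝ) (hT : 0 ≤ T) :
    Summable (fun k : ℕ => Ctil γ C Ct (k + 1) * T ^ (((k : ℝ) + 1) * γ / 2)) := by
  obtain ⟨hγ0, hγ1⟩ := hγ
  rcases eq_or_lt_of_le hT with hT0 | hT0
  · have : (fun k : ℕ => Ctil γ C Ct (k + 1) * T ^ (((k : ℝ) + 1) * γ / 2)) = fun _ => 0 := by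
      funext k
      rw [← hT0, Real.zero_rpow (by positivity), mul_zero]
    rw [this]
    exact summable_zero
  · apply summable_of_ratio_norm_eventually_le (r := 1/2) (by norm_num)
    have hTb : 0 < T ^ (γ / 2) := Real.rpow_pos_of_pos hT0 _
    set δ : ℝ := 1 / (4 * (C * T ^ (γ / 2)) + 1) with hδdef
    have hδpos : 0 < δ := by positivity
    have htend : Filter.Tendsto (fun k : ℕ => ((k : ℝ) + 1) * γ / 2) Filter.atTop
        Filter.atTop := by
      have h1 : Filter.Tendsto (fun k : ℕ => ((k : ℝ) + 1)) Filter.atTop Filter.atTop :=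
        tendsto_atTop_add_const_right _ 1 tendsto_natCast_atTop_atTop
      exact (h1.atTop_mul_const hγ0).atTop_div_const two_pos
    have hBsmall : ∀ᶠ k : ℕ in Filter.atTop,
        Beta (((k : ℝ) + 1) * γ / 2) (γ / 2) ≤ δ :=
      htend.eventually (beta_eventually_le (by positivity) hδpos)
    filter_upwards [hBsmall] with k hB
    set Bk := Beta (((k : ℝ) + 1) * γ / 2) (γ / 2) with hBkdef
    have hBk0 : 0 ≤ Bk := beta_nonneg _ _
    set q : ℝ := (((k : ℝ) + 2) / ((k : ℝ) + 1)) * (C * Bk * T ^ (γ / 2)) with hqdef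
    have hk1 : (0:ℝ) < (k : ℝ) + 1 := by positivity
    have heq : Ctil γ C Ct (k + 1 + 1) * T ^ ((((k + 1 : ℕ) : ℝ) + 1) * γ / 2)
        = (Ctil γ C Ct (k + 1) * T ^ (((k : ℝ) + 1) * γ / 2)) * q := by
      rw [ctil_eq γ C Ct (k + 1), ctil_eq γ C Ct k,
        Finset.prod_Icc_succ_top (Nat.le_add_left 1 k)]
      have hexp : (((k + 1 : ℕ) : ℝ) + 1) * γ / 2 = ((k : ℝ) + 1) * γ / 2 + γ / 2 := by
        push_cast; ring
      rw [hexp, Real.rpow_add hT0]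
      rw [hqdef, hBkdef]
      push_cast
      field_simp
      simp only [mul_comm γ]
      ring
    have hq0 : 0 ≤ q := by
      apply mul_nonneg
      · positivity
      · exact mul_nonneg (mul_nonneg hC.le hBk0) hTb.le
    have hqle : q ≤ 1 / 2 := by
      have hfrac : ((k : ℝ) + 2) / ((k : ℝ) + 1) ≤ 2 := by
        rw [div_le_iff₀ hk1]; linarith
      have h1 : q ≤ 2 * (C * Bk * T ^ (γ / 2)) := by
        apply mul_le_mul_of_nonneg_right hfrac
        exact mul_nonneg (mul_nonneg hC.le hBk0) hTb.le
      have h2 : C * Bk * T ^ (γ / 2) ≤ C * δ * T ^ (γ / 2) := by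
        apply mul_le_mul_of_nonneg_right _ hTb.le
        exact mul_le_mul_of_nonneg_left hB hC.le
      have h3 : 2 * (C * δ * T ^ (γ / 2)) ≤ 1 / 2 := by
        have hd : (0:ℝ) < 4 * (C * T ^ (γ / 2)) + 1 := by positivity
        have heq2 : 2 * (C * δ * T ^ (γ / 2))
            = 2 * (C * T ^ (γ / 2)) / (4 * (C * T ^ (γ / 2)) + 1) := by
          rw [hδdef]; field_simp
        rw [heq2, div_le_div_iff₀ hd (by norm_num : (0:ℝ) < 2)]
        nlinarith [hTb.le, hC.le]
      linarith
    rw [heq, norm_mul, mul_comm (1/2 : ℝ)]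
    apply mul_le_mul_of_nonneg_left _ (norm_nonneg _)
    rw [Real.norm_eq_abs, abs_of_nonneg hq0]
    exact hqle
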